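/- Let P be an absolutely continuous probability on ℝ^d with compact ρ,h-cone-convex support S, and let X_1,…,X_n be i.i.d. with law P, ℵ_n = {X_1,…,X_n}. Then the Hausdorff distance d_H(ℂ_{ρ,h}(ℵ_n), S) between the ρ,h-cone-convex hull of the sample and S converges to 0 almost surely. -/

import Mathlib

open MeasureTheory Metric Set Filter

noncomputable section

/-- The open finite cone with vertex `x`, axis `ξ`, opening angle `ρ` and height `h`. -/
def fcone (d : ℕ) (ρ h : ℝ) (x ξ : EuclideanSpace ℝ (Fin d)) :
    Set (EuclideanSpace ℝ (Fin d)) :=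
  {z | z ≠ x ∧ (inner ℝ ξ (‖z - x‖⁻¹ • (z - x)) : ℝ) > Real.cos (ρ / 2)} ∩ Metric.ball x h

/-- `S` is `ρ,h`-cone-convex. -/
def ConeConvex (d : ℕ) (ρ h : ℝ) (S : Set (EuclideanSpace ℝ (Fin d))) : Prop :=
  ∀ x ∈ frontier S, ∃ ξ : EuclideanSpace ℝ (Fin d), ‖ξ‖ = 1 ∧ fcone d ρ h x ξ ⊆ Sᶜ

/-- The `ρ,h`-cone-convex hull by complement. -/
def cccHull (d : ℕ) (ρ h : ℝ) (S : Set (EuclideanSpace ℝ (Fin d))) :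
    Set (EuclideanSpace ℝ (Fin d)) :=
  ⋂₀ {A | ∃ y ξ : EuclideanSpace ℝ (Fin d),
      ‖ξ‖ = 1 ∧ fcone d ρ h y ξ ∩ S = ∅ ∧ A = (fcone d ρ h y ξ)ᶜ}

/-- The `ρ,h`-cone-convex hull: intersection of all compact `ρ,h`-cone-convex supersets. -/
def ccHull (d : ℕ) (ρ h : ℝ) (S : Set (EuclideanSpace ℝ (Fin d))) :
    Set (EuclideanSpace ℝ (Fin d)) :=
  ⋂₀ {B | S ⊆ B ∧ IsCompact B ∧ B.Nonempty ∧ ConeConvex d ρ h B}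

/-- If i.i.d. points have positive probability of landing in `B`, then a.s. some point hits `B`. -/
lemma ae_exists_hit {Ω : Type} [MeasureSpace Ω] [IsProbabilityMeasure (volume : Measure Ω)]
    {E : Type*} [MeasurableSpace E] (P : Measure E) [IsProbabilityMeasure P]
    (X : ℕ → Ω → E) (hmeas : ∀ i, Measurable (X i))
    (hindep : ProbabilityTheory.iIndepFun X volume)
    (hlaw : ∀ i, Measure.map (X i) volume = P)
    (B : Set E) (hB : MeasurableSet B) (hp : 0 < P B) :
    ∀ᵐ ω ∂(volume : Measure Ω), ∃ i, X i ω ∈ B := by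
  have hkey : ∀ n : ℕ, volume (⋂ i, X i ⁻¹' Bᶜ) ≤ (P Bᶜ) ^ n := by
    intro n
    calc volume (⋂ i, X i ⁻¹' Bᶜ)
        ≤ volume (⋂ i ∈ Finset.range n, X i ⁻¹' Bᶜ) := by
          apply measure_mono
          intro ω hω
          simp only [Set.mem_iInter] at hω ⊢
          exact fun i _ => hω i
      _ = ∏ i ∈ Finset.range n, volume (X i ⁻¹' Bᶜ) :=
          hindep.measure_inter_preimage_eq_mul (Finset.range n) (fun i _ => hB.compl)
      _ = (P Bᶜ) ^ n := by
          rw [Finset.prod_congr rfl (g := fun _ => P Bᶜ) (fun i _ => by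
            rw [← hlaw i, Measure.map_apply (hmeas i) hB.compl])]
          simp
  have hlt : P Bᶜ < 1 := by
    rw [prob_compl_eq_one_sub hB]
    exact ENNReal.sub_lt_self ENNReal.one_ne_top one_ne_zero hp.ne'
  have h0 : volume (⋂ i, X i ⁻¹' Bᶜ) = 0 := by
    refine le_antisymm ?_ (zero_le)
    exact ge_of_tendsto' (ENNReal.tendsto_pow_atTop_nhds_zero_of_lt_one hlt) hkey
  rw [ae_iff]
  convert h0 using 2
  ext ω
  simp [Set.mem_iInter]

theorem stmt_11 {d : ℕ} {ρ h : ℝ} (hρ : ρ ∈ Set.Ioc 0 Real.pi) (hh : 0 < h)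
    (P : Measure (EuclideanSpace ℝ (Fin d))) [IsProbabilityMeasure P]
    (hac : P ≪ volume)
    (S : Set (EuclideanSpace ℝ (Fin d)))
    (hsupp : ∀ x, x ∈ S ↔ ∀ r : ℝ, 0 < r → 0 < P (Metric.ball x r))
    (hS : IsCompact S) (hcc : ConeConvex d ρ h S)
    (Ω : Type) [MeasureSpace Ω] [IsProbabilityMeasure (volume : Measure Ω)]
    (X : ℕ → Ω → EuclideanSpace ℝ (Fin d))
    (hmeas : ∀ i, Measurable (X i))
    (hindep : ProbabilityTheory.iIndepFun X volume)
    (hlaw : ∀ i, Measure.map (X i) volume = P) :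
    ∀ᵐ ω ∂(volume : Measure Ω),
      Tendsto (fun n : ℕ =>
          Metric.hausdorffDist (ccHull d ρ h ((fun i => X i ω) '' {i | i < n})) S)
        atTop (nhds 0) := by
  classical
  -- The support has full measure.
  have hSc0 : P Sᶜ = 0 := by
    apply measure_null_of_locally_null
    intro x hx
    have hx' : ¬ ∀ r : ℝ, 0 < r → 0 < P (Metric.ball x r) := fun hr => hx ((hsupp x).2 hr)
    push_neg at hx'
    obtain ⟨r, hr, hr0⟩ := hx'
    exact ⟨Metric.ball x r, mem_nhdsWithin_of_mem_nhds (Metric.ball_mem_nhds x hr),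
      nonpos_iff_eq_zero.mp hr0⟩
  have hSne : S.Nonempty := by
    rw [Set.nonempty_iff_ne_empty]
    rintro rfl
    simp only [Set.compl_empty] at hSc0
    rw [measure_univ] at hSc0
    exact one_ne_zero hSc0
  -- a.s. all sample points lie in `S`.
  have hmemS : ∀ᵐ ω ∂(volume : Measure Ω), ∀ i, X i ω ∈ S := by
    rw [ae_all_iff]
    intro i
    rw [ae_iff]
    have : {ω | ¬ X i ω ∈ S} = X i ⁻¹' Sᶜ := rfl
    rw [this, ← Measure.map_apply (hmeas i) (hS.isClosed.measurableSet.compl), hlaw i]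
    exact hSc0
  -- finite covers of `S` by balls of radius `1/(k+1)` centered in `S`.
  have hcov : ∀ k : ℕ, ∃ F : Set (EuclideanSpace ℝ (Fin d)), F ⊆ S ∧ F.Finite ∧
      S ⊆ ⋃ c ∈ F, Metric.ball c (1 / (k + 1 : ℝ)) := by
    intro k
    obtain ⟨F, hFS, hFfin, hFcov⟩ := hS.elim_finite_subcover_image
      (fun c (_ : c ∈ S) => Metric.isOpen_ball (x := c) (ε := 1 / (k + 1 : ℝ)))
      (fun x hx => Set.mem_biUnion hx (by
        simp only [Metric.mem_ball, dist_self]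
        positivity))
    exact ⟨F, hFS, hFfin, hFcov⟩
  choose F hFS hFfin hFcov using hcov
  -- a.s. every covering ball is eventually hit.
  have hhit : ∀ᵐ ω ∂(volume : Measure Ω), ∀ k : ℕ, ∀ c ∈ F k,
      ∃ i, X i ω ∈ Metric.ball c (1 / (k + 1 : ℝ)) := by
    rw [ae_all_iff]
    intro k
    rw [ae_ball_iff (hFfin k).countable]
    intro c hc
    refine ae_exists_hit P X hmeas hindep hlaw _ measurableSet_ball ?_
    exact (hsupp c).1 (hFS k hc) _ (by positivity)
  filter_upwards [hmemS, hhit] with ω hωS hωhit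
  set ℵ : ℕ → Set (EuclideanSpace ℝ (Fin d)) := fun n => (fun i => X i ω) '' {i | i < n} with hℵ
  have sub1 : ∀ n, ℵ n ⊆ S := by
    rintro n x ⟨i, _, rfl⟩
    exact hωS i
  have hull_sub : ∀ n, ccHull d ρ h (ℵ n) ⊆ S := fun n =>
    Set.sInter_subset_of_mem ⟨sub1 n, hS, hSne, hcc⟩
  have sub_hull : ∀ n, ℵ n ⊆ ccHull d ρ h (ℵ n) := fun n x hx =>
    Set.mem_sInter.2 fun B hB => hB.1 hx
  rw [Metric.tendsto_atTop]
  intro ε hε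
  obtain ⟨k, hk⟩ := exists_nat_one_div_lt (by positivity : (0:ℝ) < ε / 3)
  set r : ℝ := 1 / (k + 1 : ℝ) with hrdef
  have hr0 : 0 < r := by positivity
  -- choose hitting indices for the centers of the `k`-th cover.
  have hch : ∀ c : EuclideanSpace ℝ (Fin d), ∃ i : ℕ,
      c ∈ F k → X i ω ∈ Metric.ball c r := by
    intro c
    by_cases hc : c ∈ F k
    · obtain ⟨i, hi⟩ := hωhit k c hc
      exact ⟨i, fun _ => hi⟩
    · exact ⟨0, fun hc' => absurd hc' hc⟩
  choose g hg using hch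
  refine ⟨(hFfin k).toFinset.sup g + 1, fun n hn => ?_⟩
  have hbound : Metric.hausdorffDist (ccHull d ρ h (ℵ n)) S ≤ 2 * r := by
    apply Metric.hausdorffDist_le_of_mem_dist (by positivity)
    · intro x hx
      refine ⟨x, hull_sub n hx, by simp; positivity⟩
    · intro y hy
      obtain ⟨c, hc, hyc⟩ := Set.mem_iUnion₂.1 (hFcov k hy)
      have hgc : g c < n := by
        have := Finset.le_sup (f := g) ((hFfin k).mem_toFinset.2 hc)
        omega
      have hxmem : X (g c) ω ∈ ℵ n := ⟨g c, hgc, rfl⟩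
      refine ⟨X (g c) ω, sub_hull n hxmem, ?_⟩
      have h1 : dist y c < r := hyc
      have h2 : dist (X (g c) ω) c < r := hg c hc
      calc dist y (X (g c) ω) ≤ dist y c + dist c (X (g c) ω) := dist_triangle _ _ _
        _ ≤ r + r := by rw [dist_comm c]; linarith
        _ = 2 * r := by ring
  have hnn : 0 ≤ Metric.hausdorffDist (ccHull d ρ h (ℵ n)) S := Metric.hausdorffDist_nonneg
  rw [Real.dist_eq, sub_zero, abs_of_nonneg hnn]
  calc Metric.hausdorffDist (ccHull d ρ h (ℵ n)) S ≤ 2 * r := hbound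
    _ < ε := by rw [hrdef]; linarith
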